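/- Let G : B → C be a pointed functor between pointed groupoids, K(G) its strong homotopy kernel and P : K(G) → B the projection. Then the group homomorphism π₁(P) : π₁(K(G)) → π₁(B) is injective and its image equals the kernel of π₁(G) : π₁(B) → π₁(C); hence π₁(K(G)) is isomorphic to ker(π₁(G)). -/

import Mathlib

open CategoryTheory

universe w v₁ v₂ v₃ v₄ u₁ u₂ u₃ u₄

namespace Snail

variable {A : Type u₁} [Groupoid.{v₁} A] {B : Type u₂} [Groupoid.{v₂} B]

/-- The set of connected components (isomorphism classes of objects) of a groupoid. -/
def Pi0 (A : Type u₁) [Groupoid.{v₁} A] : Type u₁ :=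
  Quotient (CategoryTheory.isIsomorphicSetoid A)

/-- The connected component of an object. -/
def pi0 (a : A) : Pi0 A := Quotient.mk (CategoryTheory.isIsomorphicSetoid A) a

/-- The map induced on connected components by a functor; for pointed functors
between pointed groupoids this is the induced pointed map `π₀(F)`. -/
def pi0Map (F : A ⥤ B) : Pi0 A → Pi0 B :=
  Quotient.map F.obj fun _ _ h => Nonempty.map (fun i => F.mapIso i) h

/-- The group homomorphism `π₁(F) : Aut (*_A) →* Aut (*_B)` induced by a pointed
functor `F` (with `F.obj pA = pB`). -/
def pi1Map (F : A ⥤ B) {pA : A} {pB : B} (h : F.obj pA = pB) : Aut pA →* Aut pB :=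
  (Aut.autMulEquivOfIso (eqToIso h)).toMonoidHom.comp (F.mapAut pA)

/-- The strong homotopy kernel `K(F)` of a functor `F : A ⥤ B` with respect to the
basepoint `pB` of `B` : objects are pairs `(a, β : F a ⟶ pB)`. -/
structure HKer (F : A ⥤ B) (pB : B) : Type (max u₁ v₂) where
  pt : A
  arr : F.obj pt ⟶ pB

/-- Morphisms `(a, β) ⟶ (a', β')` in `K(F)` are morphisms `f : a ⟶ a'` of `A` with
`F.map f ≫ β' = β`. -/
instance hkerGroupoid (F : A ⥤ B) (pB : B) : Groupoid (HKer F pB) where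
  Hom x y := { f : x.pt ⟶ y.pt // F.map f ≫ y.arr = x.arr }
  id x := ⟨𝟙 x.pt, by simp⟩
  comp {x y z} f g := ⟨f.1 ≫ g.1, by rw [F.map_comp, Category.assoc, g.2, f.2]⟩
  id_comp f := Subtype.ext (Category.id_comp f.1)
  comp_id f := Subtype.ext (Category.comp_id f.1)
  assoc f g h := Subtype.ext (Category.assoc f.1 g.1 h.1)
  inv {x y} f := ⟨Groupoid.inv f.1, by
    obtain ⟨g, h⟩ := f
    dsimp only
    rw [← h, ← Category.assoc, ← F.map_comp, Groupoid.inv_comp, F.map_id, Category.id_comp]⟩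
  inv_comp f := Subtype.ext (Groupoid.inv_comp f.1)
  comp_inv f := Subtype.ext (Groupoid.comp_inv f.1)

/-- The projection functor `P : K(F) ⥤ A`, `(a, β) ↦ a`, `f ↦ f`. -/
def hkerProj (F : A ⥤ B) (pB : B) : HKer F pB ⥤ A where
  obj x := x.pt
  map f := f.1
  map_id _ := rfl
  map_comp _ _ := rfl


variable {C : Type u₃} [Groupoid.{v₃} C]

/-- For a pointed functor `G : B ⥤ C` with strong homotopy kernel `K(G)` and
projection `P : K(G) ⥤ B`, the homomorphism `π₁(P)` is injective with image the
kernel of `π₁(G)`; hence `π₁(K(G))` is isomorphic to `ker (π₁(G))`. -/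
theorem pi1_hkerProj_kernel {B : Type u₂} [Groupoid.{v₂} B] {C : Type u₃}
    [Groupoid.{v₃} C] (G : B ⥤ C) (pB : B) (pC : C) (hG : G.obj pB = pC) :
    Function.Injective (pi1Map (hkerProj G pC)
      (rfl : (hkerProj G pC).obj ⟨pB, eqToHom hG⟩ = pB)) ∧
    (∀ b : Aut pB,
      (∃ k : Aut (⟨pB, eqToHom hG⟩ : HKer G pC),
        pi1Map (hkerProj G pC) rfl k = b) ↔ pi1Map G hG b = 1) ∧
    Nonempty (Aut (⟨pB, eqToHom hG⟩ : HKer G pC) ≃* (pi1Map G hG).ker) := by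
  set x₀ : HKer G pC := ⟨pB, eqToHom hG⟩ with hx₀
  -- description of the projection map on automorphisms
  have hP : ∀ k : Aut x₀, (pi1Map (hkerProj G pC) rfl k).hom = k.hom.1 := by
    intro k
    simp only [pi1Map, Aut.autMulEquivOfIso, MonoidHom.comp_apply,
      MulEquiv.toMonoidHom_eq_coe, MonoidHom.coe_coe, MulEquiv.coe_mk, Equiv.coe_fn_mk,
      eqToIso_refl, Iso.refl_inv, Iso.refl_hom, Category.comp_id, Category.id_comp]
    rfl
  -- characterization of being in the kernel
  have hker : ∀ b : Aut pB, pi1Map G hG b = 1 ↔ G.map b.hom ≫ eqToHom hG = eqToHom hG := by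
    intro b
    constructor
    · intro h
      have h2 : eqToHom hG.symm ≫ G.map b.hom ≫ eqToHom hG = 𝟙 pC := congrArg Iso.hom h
      calc G.map b.hom ≫ eqToHom hG
          = eqToHom hG ≫ eqToHom hG.symm ≫ G.map b.hom ≫ eqToHom hG := by simp
        _ = eqToHom hG := by rw [h2]; simp
    · intro h
      apply Aut.ext
      show eqToHom hG.symm ≫ G.map b.hom ≫ eqToHom hG = 𝟙 pC
      rw [h]
      simp
  -- injectivity
  have hinj : Function.Injective (pi1Map (hkerProj G pC)
      (rfl : (hkerProj G pC).obj x₀ = pB)) := by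
    intro k k' h
    apply Aut.ext
    apply Subtype.ext
    have := congrArg Iso.hom h
    rw [hP, hP] at this
    exact this
  -- surjectivity onto kernel : construction
  have hmem : ∀ b : Aut pB, G.map b.hom ≫ eqToHom hG = eqToHom hG →
      ∃ k : Aut x₀, pi1Map (hkerProj G pC) rfl k = b := by
    intro b hb
    have hb' : G.map b.inv ≫ eqToHom hG = eqToHom hG := by
      calc G.map b.inv ≫ eqToHom hG = G.map b.inv ≫ G.map b.hom ≫ eqToHom hG := by rw [hb]
        _ = eqToHom hG := by rw [← Category.assoc, ← G.map_comp, b.inv_hom_id, G.map_id,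
              Category.id_comp]
    refine ⟨⟨⟨b.hom, hb⟩, ⟨b.inv, hb'⟩, ?_, ?_⟩, ?_⟩
    · exact Subtype.ext b.hom_inv_id
    · exact Subtype.ext b.inv_hom_id
    · apply Aut.ext
      exact hP _
  refine ⟨hinj, ?_, ?_⟩
  · intro b
    rw [hker b]
    constructor
    · rintro ⟨k, rfl⟩
      have : (pi1Map (hkerProj G pC) rfl k).hom = k.hom.1 := hP k
      rw [this]
      exact k.hom.2
    · exact hmem b
  · -- the mul-equiv
    refine ⟨MulEquiv.ofBijective
      ((pi1Map (hkerProj G pC) (rfl : (hkerProj G pC).obj x₀ = pB)).codRestrict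
        (pi1Map G hG).ker ?_) ⟨?_, ?_⟩⟩
    · intro k
      refine MonoidHom.mem_ker.mpr ?_
      refine (hker _).mpr ?_
      have : (pi1Map (hkerProj G pC) rfl k).hom = k.hom.1 := hP k
      rw [this]
      exact k.hom.2
    · intro k k' h
      exact hinj (congrArg Subtype.val h)
    · rintro ⟨b, hb⟩
      rw [MonoidHom.mem_ker, hker] at hb
      obtain ⟨k, hk⟩ := hmem b hb
      exact ⟨k, Subtype.ext hk⟩
end Snail
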